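/- Every isolated plane curve singularity admits a nice total order on its set of branches. (Proved by induction on the number of blow-ups needed for the minimal embedded resolution: for one branch the unique order is nice; otherwise any total order on the tangent directions combined with nice orders on the strict transforms at each tangent point induces a nice total order.) -/

import Mathlib

/-- Recursive combinatorial model of the resolution process of an isolated plane
curve singularity: either the germ is smooth (a single branch), or blowing up the
origin produces `n + 1` distinct tangent points, at each of which sits the germ of
the strict transform, a plane curve requiring fewer blow-ups. -/
inductive CurveTree : Type where
  | smooth : CurveTree
  | blowup (n : ℕ) (children : Fin (n + 1) → CurveTree) : CurveTree

/-- The set of branches of the curve germ: a smooth germ has a single branch, and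
the branches of a singular germ are the branches of its strict transforms at the
tangent points. -/
def CurveTree.Branches : CurveTree → Type
  | .smooth => Unit
  | .blowup n c => Σ i : Fin (n + 1), (c i).Branches

/-- A (strict total) order `lt` on the branches is *nice* if: (i) for a smooth germ
(one branch) the unique order is nice; (ii) two branches with the same tangent
compare in the same way against any branch with a different tangent; (iii) the
induced order on the branches of each strict transform is again nice. -/
def CurveTree.Nice : (T : CurveTree) → (T.Branches → T.Branches → Prop) → Prop
  | .smooth, _ => True
  | .blowup n c, lt =>
      (∀ (i j : Fin (n + 1)) (a b : (c i).Branches) (d : (c j).Branches),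
          i ≠ j →
            ((lt ⟨i, a⟩ ⟨j, d⟩ ↔ lt ⟨i, b⟩ ⟨j, d⟩) ∧
             (lt ⟨j, d⟩ ⟨i, a⟩ ↔ lt ⟨j, d⟩ ⟨i, b⟩))) ∧
      (∀ i : Fin (n + 1), (c i).Nice (fun a b => lt ⟨i, a⟩ ⟨i, b⟩))

lemma lex_ne_iff {n : ℕ} {α : Fin (n+1) → Type} (s : ∀ i, α i → α i → Prop)
    {i j : Fin (n+1)} (h : i ≠ j) (a : α i) (d : α j) :
    Sigma.Lex (· < ·) s ⟨i, a⟩ ⟨j, d⟩ ↔ i < j := by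
  constructor
  · intro hl
    cases hl with
    | left _ _ h' => exact h'
    | right _ _ h' => exact absurd rfl h
  · intro h'
    exact Sigma.Lex.left _ _ h'

/-- Every (isolated) plane curve singularity admits a nice total order on its set
of branches. -/
theorem exists_nice_total_order (T : CurveTree) :
    ∃ lt : T.Branches → T.Branches → Prop,
      IsStrictTotalOrder T.Branches lt ∧ T.Nice lt := by
  induction T with
  | smooth =>
    refine ⟨fun _ _ => False,
      { trichotomous := fun a b _ _ => ?_,
        irrefl := fun a h => h,
        trans := fun _ _ _ h => h.elim }, trivial⟩
    exact Subsingleton.elim (α := Unit) a b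
  | blowup n c ih =>
    choose lti hst hn using ih
    refine ⟨Sigma.Lex (· < ·) lti,
      { trichotomous := ?_, irrefl := ?_, trans := ?_ }, ?_, ?_⟩
    · rintro ⟨i, a⟩ ⟨j, b⟩
      refine fun h1 h2 => (?_ : Sigma.Lex (· < ·) lti ⟨i, a⟩ ⟨j, b⟩ ∨ _ ∨ _).elim (fun h => absurd h h1) (fun h => h.elim id (fun h => absurd h h2))
      ·
        rcases lt_trichotomy i j with h | h | h
        · exact Or.inl (Sigma.Lex.left _ _ h)
        · subst h
          rcases (Std.Trichotomous.rel_or_eq_or_rel_swap (i := (hst i).toTrichotomous) (a := a) (b := b)) with h | h | h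
          · exact Or.inl (Sigma.Lex.right _ _ h)
          · exact Or.inr (Or.inl (by rw [h]))
          · exact Or.inr (Or.inr (Sigma.Lex.right _ _ h))
        · exact Or.inr (Or.inr (Sigma.Lex.left _ _ h))
    · rintro ⟨i, a⟩ h
      cases h with
      | left _ _ h' => exact absurd h' (lt_irrefl i)
      | right _ _ h' => exact (hst i).toIrrefl.irrefl a h'
    · rintro ⟨i, a⟩ ⟨j, b⟩ ⟨k, d⟩ h1 h2
      cases h1 with
      | left _ _ h1' =>
        cases h2 with
        | left _ _ h2' => exact Sigma.Lex.left _ _ (h1'.trans h2')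
        | right _ _ h2' => exact Sigma.Lex.left _ _ h1'
      | right _ _ h1' =>
        cases h2 with
        | left _ _ h2' => exact Sigma.Lex.left _ _ h2'
        | right _ _ h2' =>
          exact Sigma.Lex.right _ _ ((hst _).toIsTrans.trans _ _ _ h1' h2')
    · intro i j a b d hij
      constructor
      · rw [lex_ne_iff _ hij, lex_ne_iff _ hij]
      · rw [lex_ne_iff _ (Ne.symm hij), lex_ne_iff _ (Ne.symm hij)]
    · intro i
      have he : (fun a b => Sigma.Lex (· < ·) lti ⟨i, a⟩ ⟨i, b⟩) = lti i := by
        funext a b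
        refine propext ⟨fun h => ?_, fun h => Sigma.Lex.right _ _ h⟩
        cases h with
        | left _ _ h' => exact absurd h' (lt_irrefl i)
        | right _ _ h' => exact h'
      rw [he]
      exact hn i
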